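/- Let V be a complex Hilbert space and let S, T : V → V be continuous linear operators such that both S∘T and T∘S are of finite rank. Then the commutator S∘T − T∘S lies in [F(V), F(V)], the additive subgroup generated by commutators of finite-rank operators. -/

import Mathlib

set_option maxHeartbeats 1000000
set_option synthInstance.maxHeartbeats 200000


/-- A continuous linear map is of finite rank if its range is finite dimensional. -/
def FiniteRank {V W : Type*} [NormedAddCommGroup V] [NormedSpace ℂ V]
    [NormedAddCommGroup W] [NormedSpace ℂ W] (T : V →L[ℂ] W) : Prop :=
  FiniteDimensional ℂ (LinearMap.range (T : V →ₗ[ℂ] W))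

/-- `[F(V), F(V)]`: the additive subgroup of the continuous endomorphisms of `V`
generated by commutators of finite-rank operators. -/
noncomputable def frCommutators (V : Type*) [NormedAddCommGroup V] [NormedSpace ℂ V] :
    AddSubgroup (V →L[ℂ] V) :=
  AddSubgroup.closure
    {C | ∃ A B : V →L[ℂ] V, FiniteRank A ∧ FiniteRank B ∧ C = A.comp B - B.comp A}

/-- If the range of `f` is contained in a finite dimensional submodule, `f` has finite rank. -/
lemma finiteRank_of_range_le {V : Type*} [NormedAddCommGroup V] [NormedSpace ℂ V]
    (f : V →L[ℂ] V) (E : Submodule ℂ V) [FiniteDimensional ℂ E]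
    (h : LinearMap.range (f : V →ₗ[ℂ] V) ≤ E) : FiniteRank f :=
  Submodule.finiteDimensional_of_le h

lemma FiniteRank.sub {V : Type*} [NormedAddCommGroup V] [NormedSpace ℂ V]
    {f g : V →L[ℂ] V} (hf : FiniteRank f) (hg : FiniteRank g) : FiniteRank (f - g) := by
  haveI : FiniteDimensional ℂ (LinearMap.range (f : V →ₗ[ℂ] V)) := hf
  haveI : FiniteDimensional ℂ (LinearMap.range (g : V →ₗ[ℂ] V)) := hg
  haveI : FiniteDimensional ℂ
      ↥(LinearMap.range (f : V →ₗ[ℂ] V) ⊔ LinearMap.range (g : V →ₗ[ℂ] V)) :=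
    Submodule.finiteDimensional_sup _ _
  refine finiteRank_of_range_le _
    (LinearMap.range (f : V →ₗ[ℂ] V) ⊔ LinearMap.range (g : V →ₗ[ℂ] V)) ?_
  rintro y ⟨x, rfl⟩
  exact Submodule.sub_mem _ (Submodule.mem_sup_left ⟨x, rfl⟩) (Submodule.mem_sup_right ⟨x, rfl⟩)

theorem stmt0 {V : Type*} [NormedAddCommGroup V] [InnerProductSpace ℂ V] [CompleteSpace V]
    (S T : V →L[ℂ] V) (hST : FiniteRank (S.comp T)) (hTS : FiniteRank (T.comp S)) :
    S.comp T - T.comp S ∈ frCommutators V := by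
  classical
  set A : V →L[ℂ] V := S.comp T with hAdef
  haveI hST' : FiniteDimensional ℂ (LinearMap.range (A : V →ₗ[ℂ] V)) := hST
  haveI := hTS
  set kerA : Submodule ℂ V := LinearMap.ker (A : V →ₗ[ℂ] V) with hkerA
  -- the orthogonal complement of the kernel is finite dimensional
  haveI : FiniteDimensional ℂ (V ⧸ kerA) :=
    (LinearMap.quotKerEquivRange (A : V →ₗ[ℂ] V)).symm.finiteDimensional
  set K : Submodule ℂ V := kerAᗮ with hK
  haveI : FiniteDimensional ℂ K := by
    refine FiniteDimensional.of_injective (kerA.mkQ.comp K.subtype) ?_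
    rw [← LinearMap.ker_eq_bot, LinearMap.ker_comp, Submodule.ker_mkQ]
    rw [Submodule.eq_bot_iff]
    rintro ⟨x, hxK⟩ hx
    have hx' : x ∈ kerA := hx
    have := (kerA.orthogonal_disjoint).symm.le_bot (Submodule.mem_inf.mpr ⟨hxK, hx'⟩)
    exact Subtype.ext this
  set E : Submodule ℂ V := LinearMap.range (A : V →ₗ[ℂ] V) ⊔ K with hE
  haveI : FiniteDimensional ℂ E := Submodule.finiteDimensional_sup _ _
  haveI : CompleteSpace E := FiniteDimensional.complete ℂ E
  set P : V →L[ℂ] V := E.subtypeL.comp E.orthogonalProjectionOnto with hP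
  have hPmem : ∀ x ∈ E, P x = x := by
    intro x hx
    show ((E.orthogonalProjectionOnto x : E) : V) = x
    exact Submodule.starProjection_eq_self_iff.mpr hx
  -- A ∘ P = A
  have hcl : IsClosed ((kerA : Set V)) := by
    have : (kerA : Set V) = A ⁻¹' {0} := by
      ext x
      simp [hkerA, LinearMap.mem_ker]
    rw [this]
    exact isClosed_singleton.preimage A.continuous
  have hKclosed : Kᗮ = kerA := by
    rw [hK, Submodule.orthogonal_orthogonal_eq_closure,
      hcl.submodule_topologicalClosure_eq]
  have hAP : A.comp P = A := by
    ext x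
    have h1 : x - P x ∈ Eᗮ := by
      exact Submodule.sub_starProjection_mem_orthogonal (K := E) x
    have h2 : x - P x ∈ kerA := by
      rw [← hKclosed]
      exact Submodule.orthogonal_le (le_sup_right.trans le_rfl) h1
    have h3 : A (x - P x) = 0 := h2
    rw [map_sub, sub_eq_zero] at h3
    show A (P x) = A x
    exact h3.symm
  have hPA : P.comp A = A := by
    ext x
    exact hPmem (A x) (Submodule.mem_sup_left ⟨x, rfl⟩)
  have hPP : P.comp P = P := by
    ext x
    exact hPmem (P x) (by simp [hP, Submodule.coe_mem])
  have hPrange : ∀ x, P x ∈ E := fun x => by simp [hP, Submodule.coe_mem]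
  -- the square-zero finite rank operator N
  set N : V →L[ℂ] V := T.comp S - (T.comp P).comp S with hN
  have hSN : S.comp N = 0 := by
    ext x
    have h1 : A (P (S x)) = A (S x) := by
      have := congrArg (fun f : V →L[ℂ] V => f (S x)) hAP
      simpa using this
    have h1' : S (T (P (S x))) = S (T (S x)) := by
      simpa [hAdef] using h1
    show S (N x) = 0
    rw [hN]
    simp only [ContinuousLinearMap.sub_apply, ContinuousLinearMap.comp_apply, map_sub]
    rw [h1', sub_self]
  have hNN : N.comp N = 0 := by
    ext x
    have h0 : S (N x) = 0 := by
      have := congrArg (fun f : V →L[ℂ] V => f x) hSN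
      simpa using this
    have h1 : N (N x) = T (S (N x)) - T (P (S (N x))) := by
      rw [hN]
      simp [ContinuousLinearMap.sub_apply, ContinuousLinearMap.comp_apply, map_sub]
      abel
    show N (N x) = 0
    rw [h1, h0]
    simp
  -- finite rank facts
  have hfrN : FiniteRank N := by
    refine FiniteRank.sub hTS ?_
    refine finiteRank_of_range_le _ (E.map (T : V →ₗ[ℂ] V)) ?_
    rintro y ⟨x, rfl⟩
    exact ⟨P (S x), hPrange (S x), rfl⟩

  haveI : FiniteDimensional ℂ (LinearMap.range (N : V →ₗ[ℂ] V)) := hfrN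
  set F : Submodule ℂ V := LinearMap.range (N : V →ₗ[ℂ] V) with hF
  haveI : FiniteDimensional ℂ F := hfrN
  haveI : CompleteSpace F := FiniteDimensional.complete ℂ F
  set P₀ : V →L[ℂ] V := F.subtypeL.comp F.orthogonalProjectionOnto with hP₀
  have hP₀mem : ∀ x ∈ F, P₀ x = x := by
    intro x hx
    show ((F.orthogonalProjectionOnto x : F) : V) = x
    exact Submodule.starProjection_eq_self_iff.mpr hx
  have hP₀range : ∀ x, P₀ x ∈ F := fun x => by simp [hP₀, Submodule.coe_mem]
  -- the four operator identities
  have e1 : (P.comp S).comp (T.comp P) = S.comp T := by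
    have : P.comp (A.comp P) = A := by rw [hAP, hPA]
    calc (P.comp S).comp (T.comp P) = P.comp (A.comp P) := by
          rw [hAdef]; ext x; simp [ContinuousLinearMap.comp_apply]
      _ = S.comp T := by rw [this, hAdef]
  have e2 : (T.comp P).comp (P.comp S) = (T.comp P).comp S := by
    ext x
    have := congrArg (fun f : V →L[ℂ] V => f (S x)) hPP
    simp only [ContinuousLinearMap.comp_apply] at this ⊢
    rw [this]
  have e3 : P₀.comp N = N := by
    ext x
    exact hP₀mem (N x) ⟨x, rfl⟩
  have e4 : N.comp P₀ = 0 := by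
    ext x
    obtain ⟨y, hy⟩ := hP₀range x
    have hy' : N y = P₀ x := hy
    have h2 : N (N y) = 0 := by
      have := congrArg (fun f : V →L[ℂ] V => f y) hNN
      simpa using this
    show N (P₀ x) = 0
    rw [← hy']
    exact h2
  -- finite rank of the four operators
  have hfrPS : FiniteRank (P.comp S) :=
    finiteRank_of_range_le _ E (by rintro y ⟨x, rfl⟩; exact hPrange (S x))
  have hfrTP : FiniteRank (T.comp P) := by
    refine finiteRank_of_range_le _ (E.map (T : V →ₗ[ℂ] V)) ?_
    rintro y ⟨x, rfl⟩
    exact ⟨P x, hPrange x, rfl⟩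
  have hfrP₀ : FiniteRank P₀ :=
    finiteRank_of_range_le _ F (by rintro y ⟨x, rfl⟩; exact hP₀range x)
  -- conclude
  have m1 : (P.comp S).comp (T.comp P) - (T.comp P).comp (P.comp S) ∈ frCommutators V :=
    AddSubgroup.subset_closure ⟨P.comp S, T.comp P, hfrPS, hfrTP, rfl⟩
  have m2 : P₀.comp N - N.comp P₀ ∈ frCommutators V :=
    AddSubgroup.subset_closure ⟨P₀, N, hfrP₀, hfrN, rfl⟩
  have key : S.comp T - T.comp S =
      ((P.comp S).comp (T.comp P) - (T.comp P).comp (P.comp S)) -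
        (P₀.comp N - N.comp P₀) := by
    rw [e1, e2, e3, e4, hN]
    abel
  rw [key]
  exact sub_mem m1 m2
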